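/- Let V be a complex vector space of dimension 2n with non-degenerate alternating forms α, β such that β⁻¹∘α has n distinct eigenvalues with 2-dimensional eigenspaces V₁,…,Vₙ. Then for any choice of nonzero vectors v_i ∈ V_i (i = 1,…,n), the span ⟨v₁,…,vₙ⟩ is an n-dimensional subspace of V that is Lagrangian (i.e., totally isotropic of dimension n) for both α and β. -/
import Mathlib


/-- With `V ≅ ℂ^{2n}`, non-degenerate alternating forms `α, β`,
and `T = β⁻¹∘α` (i.e. `α(v,w) = β(Tv,w)`) having `n` distinct eigenvalues
with 2-dimensional eigenspaces spanning `V`: for any choice of nonzero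
eigenvectors `vᵢ` (one for each eigenvalue), the span `⟨v₁,…,vₙ⟩` is an
`n`-dimensional subspace of `V` on which both `α` and `β` vanish identically,
i.e. it is Lagrangian for both `α` and `β`. -/
theorem stmt_4 {V : Type*} [AddCommGroup V] [Module ℂ V] [FiniteDimensional ℂ V]
    (n : ℕ) (hdim : Module.finrank ℂ V = 2 * n)
    (α β : LinearMap.BilinForm ℂ V)
    (hαalt : α.IsAlt) (hβalt : β.IsAlt)
    (hαnd : α.Nondegenerate) (hβnd : β.Nondegenerate)
    (T : V →ₗ[ℂ] V) (hT : ∀ v w : V, α v w = β (T v) w)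
    (lam : Fin n → ℂ) (hlam : Function.Injective lam)
    (hdim2 : ∀ i : Fin n, Module.finrank ℂ (Module.End.eigenspace T (lam i)) = 2)
    (hspan : (⨆ i : Fin n, Module.End.eigenspace T (lam i)) = ⊤)
    (v : Fin n → V)
    (hv : ∀ i : Fin n, v i ∈ Module.End.eigenspace T (lam i))
    (hv0 : ∀ i : Fin n, v i ≠ 0) :
    Module.finrank ℂ ↥(Submodule.span ℂ (Set.range v)) = n ∧
    (∀ x ∈ Submodule.span ℂ (Set.range v), ∀ y ∈ Submodule.span ℂ (Set.range v),
      α x y = 0 ∧ β x y = 0) := by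
  have hTv : ∀ i, T (v i) = lam i • v i := fun i =>
    Module.End.mem_eigenspace_iff.mp (hv i)
  have hαβ : ∀ i j, α (v i) (v j) = lam i * β (v i) (v j) := by
    intro i j
    rw [hT, hTv, map_smul]; rfl
  have hβ0 : ∀ i j, β (v i) (v j) = 0 := by
    intro i j
    rcases eq_or_ne i j with rfl | hij
    · exact hβalt _
    · have h1 : α (v i) (v j) = lam i * β (v i) (v j) := hαβ i j
      have h2 : α (v i) (v j) = lam j * β (v i) (v j) := by
        have := hαβ j i
        have ha := LinearMap.IsAlt.neg hαalt (v j) (v i)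
        have hb := LinearMap.IsAlt.neg hβalt (v j) (v i)
        rw [← ha, this, ← hb]; ring
      have : (lam i - lam j) * β (v i) (v j) = 0 := by
        rw [sub_mul, ← h1, ← h2, sub_self]
      rcases mul_eq_zero.mp this with h | h
      · exact absurd (sub_eq_zero.mp h) (fun he => hij (hlam he))
      · exact h
  have hα0 : ∀ i j, α (v i) (v j) = 0 := fun i j => by
    rw [hαβ, hβ0, mul_zero]
  have key : ∀ x ∈ Submodule.span ℂ (Set.range v), ∀ y ∈ Submodule.span ℂ (Set.range v),
      α x y = 0 ∧ β x y = 0 := by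
    have vanish : ∀ (B : LinearMap.BilinForm ℂ V), (∀ i j, B (v i) (v j) = 0) →
        ∀ x ∈ Submodule.span ℂ (Set.range v), ∀ y ∈ Submodule.span ℂ (Set.range v),
        B x y = 0 := by
      intro B hB x hx y hy
      induction hx using Submodule.span_induction with
      | mem x hxm =>
        obtain ⟨i, rfl⟩ := hxm
        induction hy using Submodule.span_induction with
        | mem y hym => obtain ⟨j, rfl⟩ := hym; exact hB i j
        | zero => simp
        | add a b _ _ ha hb => simp [ha, hb]
        | smul c a _ ha => simp [ha]
      | zero => simp
      | add a b ha' hb' ha hb => simp [map_add, LinearMap.add_apply, ha, hb]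
      | smul c a ha' ha => simp [ha]
    intro x hx y hy
    exact ⟨vanish α hα0 x hx y hy, vanish β hβ0 x hx y hy⟩
  refine ⟨?_, key⟩
  have hli : LinearIndependent ℂ v :=
    Module.End.eigenvectors_linearIndependent' T lam hlam v (fun i => ⟨hv i, hv0 i⟩)
  rw [finrank_span_eq_card hli, Fintype.card_fin]
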